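/- Let W = Hom(2𝒪(−2), 𝒪(−1) ⊕ 𝒪) on ℙ₂ = ℙ(V), with elements written as matrices x = [[z₁, z₂],[q₁, q₂]] with z_i ∈ V*, q_i ∈ S²V*. Fix the polarization Λ = (1/2, −μ₁, −μ₂) with μ₁ + μ₂ = 1 and μ₁ > 1/2. Define x to be G_red-stable if for every choice of subspaces M′ ⊆ ℂ², N′₁ ⊆ ℂ, N′₂ ⊆ ℂ, not all zero and not all full, such that the component maps of x send M′ into N′₁ (via (z₁,z₂)) and into N′₂ (via (q₁,q₂)), one has (1/2)dim M′ < μ₁ dim N′₁ + μ₂ dim N′₂. Then: (i) x is G_red-stable if and only if z₁ ∧ z₂ ≠ 0 and (q₁, q₂) ≠ (0,0); (ii) x is G-stable (i.e. for every z ∈ V*, the matrix [[z₁, z₂],[q₁ + z z₁, q₂ + z z₂]] is G_red-stable) if and only if z₁ ∧ z₂ ≠ 0 and z₁q₂ − z₂q₁ ≠ 0 in S³V*. -/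

import Mathlib

open MvPolynomial Module

/-- King stability, with respect to the polarization `(1/2, −μ₁, −μ₂)`, of the morphism
`2𝒪(−2) → 𝒪(−1) ⊕ 𝒪` on `ℙ₂ = ℙ(V)` (`dim V = 3`) given by the matrix
`[[z₁, z₂], [q₁, q₂]]`:  for every choice of subspaces `M′ ⊆ ℂ²`, `N′₁, N′₂ ⊆ ℂ`, not all
zero and not all full, compatible with the morphism (i.e. if `N′ᵢ = 0` then the
corresponding row kills `M′`), one has `(1/2)·dim M′ < μ₁·dim N′₁ + μ₂·dim N′₂`. -/
def GredStable (μ₁ μ₂ : ℚ) (z₁ z₂ q₁ q₂ : MvPolynomial (Fin 3) ℂ) : Prop :=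
  ∀ (M' : Submodule ℂ (Fin 2 → ℂ)) (N'₁ N'₂ : Submodule ℂ ℂ),
    (N'₁ = ⊥ → ∀ v ∈ M', v 0 • z₁ + v 1 • z₂ = 0) →
    (N'₂ = ⊥ → ∀ v ∈ M', v 0 • q₁ + v 1 • q₂ = 0) →
    ¬(M' = ⊥ ∧ N'₁ = ⊥ ∧ N'₂ = ⊥) →
    ¬(M' = ⊤ ∧ N'₁ = ⊤ ∧ N'₂ = ⊤) →
    (1 / 2 : ℚ) * (finrank ℂ M' : ℚ) <
      μ₁ * (finrank ℂ N'₁ : ℚ) + μ₂ * (finrank ℂ N'₂ : ℚ)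

lemma degree_one_single {d : Fin 3 →₀ ℕ} (hd : d.degree = 1) : ∃ i, d = Finsupp.single i 1 := by
  have hd0 : d ≠ 0 := by intro h; rw [h] at hd; simp at hd
  obtain ⟨i, hi⟩ : ∃ i, d i ≠ 0 := by
    by_contra h; push_neg at h; exact hd0 (Finsupp.ext h)
  have hle := Finsupp.le_degree i d
  have hdi : d i = 1 := by omega
  refine ⟨i, Finsupp.ext fun j => ?_⟩
  rcases eq_or_ne j i with rfl | hji
  · simpa using hdi
  · rw [Finsupp.single_eq_of_ne' (Ne.symm hji)]
    by_contra hj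
    have hjmem : j ∈ d.support := Finsupp.mem_support_iff.mpr hj
    have himem : i ∈ d.support := Finsupp.mem_support_iff.mpr hi
    have hsub : ({i, j} : Finset (Fin 3)) ⊆ d.support := by
      intro x hx; simp at hx; rcases hx with rfl | rfl <;> assumption
    have h2 : d i + d j ≤ d.degree := by
      rw [Finsupp.degree]
      calc d i + d j = ∑ x ∈ ({i, j} : Finset (Fin 3)), d x := (Finset.sum_pair hji.symm).symm
        _ ≤ _ := Finset.sum_le_sum_of_subset hsub
    omega

lemma linear_rep {z : MvPolynomial (Fin 3) ℂ} (hz : z.IsHomogeneous 1) :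
    z = ∑ i, MvPolynomial.C (coeff (Finsupp.single i 1) z) * X i := by
  ext d
  rw [coeff_sum]
  simp only [coeff_C_mul, coeff_X']
  by_cases hd : ∃ i, d = Finsupp.single i 1
  · obtain ⟨i₀, rfl⟩ := hd
    rw [Finset.sum_eq_single_of_mem i₀ (Finset.mem_univ _)
      (fun x _ hx => by rw [if_neg (fun h => hx ((Finsupp.single_left_inj one_ne_zero).mp h)),
        mul_zero])]
    simp
  · push_neg at hd
    have h1 : coeff d z = 0 := by
      by_contra h
      have hdeg : d.degree = 1 := by rw [Finsupp.degree_eq_weight_one]; exact hz h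
      obtain ⟨i, hi⟩ := degree_one_single hdeg
      exact hd i hi
    rw [h1]
    symm
    exact Finset.sum_eq_zero fun x _ => by rw [if_neg (fun h => hd x h.symm), mul_zero]
lemma prime_X_mv (j : Fin 3) : Prime (X j : MvPolynomial (Fin 3) ℂ) := by
  have h0 : Prime (X 0 : MvPolynomial (Fin 3) ℂ) := by
    rw [← MulEquiv.prime_iff (MvPolynomial.finSuccEquiv ℂ 2).toRingEquiv.toMulEquiv]
    have : (MvPolynomial.finSuccEquiv ℂ 2).toRingEquiv.toMulEquiv (X 0) = Polynomial.X := by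
      simp [finSuccEquiv_X_zero]
    rw [this]
    exact Polynomial.prime_X
  rw [← MulEquiv.prime_iff (renameEquiv ℂ (Equiv.swap j 0)).toRingEquiv.toMulEquiv]
  have : (renameEquiv ℂ (Equiv.swap j 0)).toRingEquiv.toMulEquiv (X j)
      = (X 0 : MvPolynomial (Fin 3) ℂ) := by
    simp [renameEquiv_apply, rename_X]
  rw [this]
  exact h0
lemma prime_of_homog_one {z : MvPolynomial (Fin 3) ℂ} (hz : z.IsHomogeneous 1) (hz0 : z ≠ 0) :
    Prime z := by
  obtain ⟨j, hj⟩ : ∃ j, coeff (Finsupp.single j 1) z ≠ 0 := by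
    by_contra h; push_neg at h
    apply hz0
    rw [linear_rep hz, Finset.sum_eq_zero]
    intro i _; rw [h i, map_zero, zero_mul]
  set a : ℂ := coeff (Finsupp.single j 1) z with ha
  set S : MvPolynomial (Fin 3) ℂ :=
    ∑ i ∈ Finset.univ.erase j, C (coeff (Finsupp.single i 1) z) * X i with hS
  have hrep' : z = C a * X j + S := by
    have h0 := linear_rep hz
    rw [← Finset.add_sum_erase Finset.univ _ (Finset.mem_univ j)] at h0
    rw [ha]
    exact h0
  set f : MvPolynomial (Fin 3) ℂ →ₐ[ℂ] MvPolynomial (Fin 3) ℂ :=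
    aeval (Function.update X j z) with hf
  set g : MvPolynomial (Fin 3) ℂ →ₐ[ℂ] MvPolynomial (Fin 3) ℂ :=
    aeval (Function.update X j (C a⁻¹ * (X j - S))) with hg
  have hfX : ∀ i ≠ j, f (X i) = X i := by
    intro i hi; rw [hf, aeval_X, Function.update_of_ne hi]
  have hgX : ∀ i ≠ j, g (X i) = X i := by
    intro i hi; rw [hg, aeval_X, Function.update_of_ne hi]
  have hfXj : f (X j) = z := by rw [hf, aeval_X, Function.update_self]
  have hgXj : g (X j) = C a⁻¹ * (X j - S) := by
    rw [hg, aeval_X, Function.update_self]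
  have hCf : ∀ a : ℂ, f (C a) = C a := fun a => by
    rw [show (C a : MvPolynomial (Fin 3) ℂ) = algebraMap ℂ _ a from rfl, AlgHom.commutes]
  have hCg : ∀ a : ℂ, g (C a) = C a := fun a => by
    rw [show (C a : MvPolynomial (Fin 3) ℂ) = algebraMap ℂ _ a from rfl, AlgHom.commutes]
  have hfS : f S = S := by
    rw [hS, map_sum]
    refine Finset.sum_congr rfl fun i hi => ?_
    rw [map_mul, hfX i (Finset.mem_erase.mp hi).1, hCf]
  have hgS : g S = S := by
    rw [hS, map_sum]
    refine Finset.sum_congr rfl fun i hi => ?_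
    rw [map_mul, hgX i (Finset.mem_erase.mp hi).1, hCg]
  have hfg : f.comp g = AlgHom.id ℂ _ := by
    apply MvPolynomial.algHom_ext
    intro i
    rcases eq_or_ne i j with rfl | hij
    · rw [AlgHom.comp_apply, hgXj, map_mul, hCf, map_sub, hfXj, hfS, AlgHom.id_apply]
      have hzS : z - S = C a * X i := by rw [hrep']; ring
      rw [hzS, ← mul_assoc, ← C_mul, inv_mul_cancel₀ hj, C_1, one_mul]
    · rw [AlgHom.comp_apply, hgX i hij, hfX i hij, AlgHom.id_apply]
  have hgf : g.comp f = AlgHom.id ℂ _ := by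
    apply MvPolynomial.algHom_ext
    intro i
    rcases eq_or_ne i j with rfl | hij
    · rw [AlgHom.comp_apply, hfXj, AlgHom.id_apply, hrep', map_add, map_mul, hCg, hgXj, hgS,
        ← mul_assoc, ← C_mul, mul_inv_cancel₀ hj, C_1, one_mul, sub_add_cancel]
    · rw [AlgHom.comp_apply, hfX i hij, hgX i hij, AlgHom.id_apply]
  set e : MvPolynomial (Fin 3) ℂ ≃ₐ[ℂ] MvPolynomial (Fin 3) ℂ := AlgEquiv.ofAlgHom g f hgf hfg
    with he
  have hez : e z = X j := by
    have h1 := congrArg (fun p => p (X j)) hgf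
    simp only [AlgHom.comp_apply, AlgHom.id_apply, hfXj] at h1
    exact h1
  rw [← MulEquiv.prime_iff e.toRingEquiv.toMulEquiv]
  have h2 : e.toRingEquiv.toMulEquiv z = X j := hez
  rw [h2]
  exact prime_X_mv j
lemma factor_eq {z q r : MvPolynomial (Fin 3) ℂ} (hz : z.IsHomogeneous 1)
    {n : ℕ} (hq : q.IsHomogeneous (n + 1)) (heq : q = z * r) :
    q = z * homogeneousComponent n r := by
  set N := r.totalDegree + n + 2 with hN
  have hsub : Finset.range (r.totalDegree + 1) ⊆ Finset.range N :=
    Finset.range_subset_range.mpr (by omega)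
  have hr : r = ∑ i ∈ Finset.range N, homogeneousComponent i r := by
    conv_lhs => rw [← sum_homogeneousComponent r]
    exact Finset.sum_subset hsub (fun i _ hi => homogeneousComponent_eq_zero _ r
      (by simp only [Finset.mem_range, not_lt] at hi; omega))
  have h1N : n ∈ Finset.range N := by simp [hN]; omega
  have hsplit : z * r = z * homogeneousComponent n r
      + ∑ i ∈ (Finset.range N).erase n, z * homogeneousComponent i r := by
    conv_lhs => rw [hr]
    rw [Finset.mul_sum, ← Finset.add_sum_erase _ _ h1N]
  set s : MvPolynomial (Fin 3) ℂ := ∑ i ∈ (Finset.range N).erase n, z * homogeneousComponent i r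
    with hs
  have hseq : s = q - z * homogeneousComponent n r := by
    rw [heq, hsplit]; ring
  have hshom : s.IsHomogeneous (n + 1) := by
    rw [hseq]
    exact hq.sub (by simpa [add_comm] using hz.mul (homogeneousComponent_isHomogeneous n r))
  have hs2 : homogeneousComponent (n + 1) s = 0 := by
    rw [hs, map_sum]
    apply Finset.sum_eq_zero
    intro i hi
    have hih : (z * homogeneousComponent i r).IsHomogeneous (1 + i) :=
      hz.mul (homogeneousComponent_isHomogeneous i r)
    rw [homogeneousComponent_of_mem hih, if_neg]
    have := (Finset.mem_erase.mp hi).1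
    omega
  have hs0 : s = 0 := by
    have := homogeneousComponent_of_mem (p := s) (m := n + 1) hshom
    rw [if_pos rfl] at this
    rw [← this, hs2]
  rw [heq, hsplit, hs0, add_zero]
lemma bot_ne_top_C : (⊥ : Submodule ℂ ℂ) ≠ ⊤ := by
  intro h
  have : (1 : ℂ) ∈ (⊥ : Submodule ℂ ℂ) := h.symm ▸ Submodule.mem_top
  simp [Submodule.mem_bot] at this

lemma bot_ne_top_C2 : (⊥ : Submodule ℂ (Fin 2 → ℂ)) ≠ ⊤ := by
  intro h
  have : (fun _ => 1 : Fin 2 → ℂ) ∈ (⊥ : Submodule ℂ (Fin 2 → ℂ)) := h.symm ▸ Submodule.mem_top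
  rw [Submodule.mem_bot] at this
  exact one_ne_zero (congrFun this 0)

lemma gred_iff (μ₁ μ₂ : ℚ) (hμsum : μ₁ + μ₂ = 1) (hμ₂pos : 0 < μ₂) (hμ₁ : 1 / 2 < μ₁)
    (z₁ z₂ q₁ q₂ : MvPolynomial (Fin 3) ℂ) :
    GredStable μ₁ μ₂ z₁ z₂ q₁ q₂ ↔
      (LinearIndependent ℂ ![z₁, z₂] ∧ ¬(q₁ = 0 ∧ q₂ = 0)) := by
  have hrk2 : finrank ℂ (⊤ : Submodule ℂ (Fin 2 → ℂ)) = 2 := by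
    rw [finrank_top]; simp
  have hrk1 : finrank ℂ (⊤ : Submodule ℂ ℂ) = 1 := by
    rw [finrank_top]; simp
  constructor
  · intro h
    constructor
    · rw [LinearIndependent.pair_iff]
      intro s t hst
      by_contra hne
      have hv : (![s, t] : Fin 2 → ℂ) ≠ 0 := by
        intro h0
        exact hne ⟨by simpa using congrFun h0 0, by simpa using congrFun h0 1⟩
      have hkey := h (Submodule.span ℂ {![s, t]}) ⊥ ⊤
        (fun _ v hv' => by
          obtain ⟨a, rfl⟩ := Submodule.mem_span_singleton.mp hv'
          simp only [Pi.smul_apply, Matrix.cons_val_zero, Matrix.cons_val_one, Matrix.head_cons,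
            smul_eq_mul]
          rw [mul_smul, mul_smul, ← smul_add, hst, smul_zero])
        (fun htop => absurd htop bot_ne_top_C.symm)
        (fun ⟨hM, _, _⟩ => hv (Submodule.span_singleton_eq_bot.mp hM))
        (fun ⟨_, hN, _⟩ => bot_ne_top_C hN)
      rw [finrank_span_singleton hv, hrk1, finrank_bot] at hkey
      push_cast at hkey
      linarith
    · rintro ⟨h1, h2⟩
      have hkey := h ⊤ ⊤ ⊥
        (fun htop => absurd htop bot_ne_top_C.symm)
        (fun _ v _ => by rw [h1, h2, smul_zero, smul_zero, add_zero])
        (fun ⟨hM, _, _⟩ => bot_ne_top_C2 hM.symm)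
        (fun ⟨_, _, hN⟩ => bot_ne_top_C hN)
      rw [hrk2, hrk1, finrank_bot] at hkey
      push_cast at hkey
      linarith
  · rintro ⟨hLI, hq⟩ M' N1 N2 h1 h2 hne0 hnetop
    rw [LinearIndependent.pair_iff] at hLI
    rcases Ideal.eq_bot_or_top N1 with rfl | rfl
    · have hM : M' = ⊥ := by
        rw [Submodule.eq_bot_iff]
        intro v hv
        obtain ⟨h0, h1'⟩ := hLI (v 0) (v 1) (h1 rfl v hv)
        funext i
        fin_cases i <;> simpa
      rcases Ideal.eq_bot_or_top N2 with rfl | rfl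
      · exact absurd ⟨hM, rfl, rfl⟩ hne0
      · rw [hM, finrank_bot, hrk1, finrank_bot]
        push_cast
        linarith
    · rcases Ideal.eq_bot_or_top N2 with rfl | rfl
      · -- N1 = ⊤, N2 = ⊥
        have hM : M' ≠ ⊤ := by
          intro hM
          apply hq
          have hq1 := h2 rfl ![1, 0] (hM ▸ Submodule.mem_top)
          have hq2 := h2 rfl ![0, 1] (hM ▸ Submodule.mem_top)
          simp only [Matrix.cons_val_zero, Matrix.cons_val_one, Matrix.head_cons, one_smul,
            zero_smul, add_zero, zero_add] at hq1 hq2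
          exact ⟨hq1, hq2⟩
        have hle : finrank ℂ M' ≤ 1 := by
          by_contra hgt
          push_neg at hgt
          have hle2 : finrank ℂ M' ≤ 2 := by
            have := Submodule.finrank_le M'
            simpa using this
          have : finrank ℂ M' = 2 := by omega
          exact hM (Submodule.eq_top_of_finrank_eq (by simpa using this))
        rw [hrk1, finrank_bot]
        have : (finrank ℂ M' : ℚ) ≤ 1 := by exact_mod_cast hle
        push_cast
        linarith
      · -- N1 = ⊤, N2 = ⊤
        have hM : M' ≠ ⊤ := fun hM => hnetop ⟨hM, rfl, rfl⟩
        have hle : finrank ℂ M' ≤ 1 := by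
          by_contra hgt
          push_neg at hgt
          have hle2 : finrank ℂ M' ≤ 2 := by
            have := Submodule.finrank_le M'
            simpa using this
          have : finrank ℂ M' = 2 := by omega
          exact hM (Submodule.eq_top_of_finrank_eq (by simpa using this))
        rw [hrk1]
        have : (finrank ℂ M' : ℚ) ≤ 1 := by exact_mod_cast hle
        push_cast
        linarith
theorem stmt14 (μ₁ μ₂ : ℚ) (hμsum : μ₁ + μ₂ = 1) (hμ₂pos : 0 < μ₂) (hμ₁ : 1 / 2 < μ₁)
    (z₁ z₂ q₁ q₂ : MvPolynomial (Fin 3) ℂ)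
    (hz₁ : z₁.IsHomogeneous 1) (hz₂ : z₂.IsHomogeneous 1)
    (hq₁ : q₁.IsHomogeneous 2) (hq₂ : q₂.IsHomogeneous 2) :
    (GredStable μ₁ μ₂ z₁ z₂ q₁ q₂ ↔
      (LinearIndependent ℂ ![z₁, z₂] ∧ ¬(q₁ = 0 ∧ q₂ = 0))) ∧
    ((∀ z : MvPolynomial (Fin 3) ℂ, z.IsHomogeneous 1 →
        GredStable μ₁ μ₂ z₁ z₂ (q₁ + z * z₁) (q₂ + z * z₂)) ↔
      (LinearIndependent ℂ ![z₁, z₂] ∧ z₁ * q₂ - z₂ * q₁ ≠ 0)) := by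
  refine ⟨gred_iff μ₁ μ₂ hμsum hμ₂pos hμ₁ z₁ z₂ q₁ q₂, ?_, ?_⟩
  · intro h
    have h0 := h 0 (isHomogeneous_zero _ _ 1)
    simp only [zero_mul, add_zero] at h0
    rw [gred_iff μ₁ μ₂ hμsum hμ₂pos hμ₁] at h0
    have hLI : LinearIndependent ℂ ![z₁, z₂] := h0.1
    refine ⟨hLI, ?_⟩
    intro hdet
    have hz₁0 : z₁ ≠ 0 := by have := hLI.ne_zero 0; simpa using this
    have hz₂0 : z₂ ≠ 0 := by have := hLI.ne_zero 1; simpa using this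
    have hnd : ¬ z₁ ∣ z₂ := by
      rintro ⟨u, hu⟩
      have hu' : z₂ = z₁ * MvPolynomial.C (coeff 0 u) := by
        have := factor_eq hz₁ (n := 0) (by simpa using hz₂) hu
        rwa [homogeneousComponent_zero] at this
      obtain ⟨-, hcon⟩ := (LinearIndependent.pair_iff.mp hLI) (coeff 0 u) (-1)
        (by rw [neg_one_smul, smul_eq_C_mul, hu']; ring)
      norm_num at hcon
    have hprime := prime_of_homog_one hz₁ hz₁0
    have hdvd : z₁ ∣ z₂ * q₁ := ⟨q₂, by linear_combination -hdet⟩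
    obtain ⟨r, hr⟩ := (hprime.2.2 z₂ q₁ hdvd).resolve_left hnd
    have hq1' : q₁ = z₁ * homogeneousComponent 1 r := factor_eq hz₁ (n := 1) hq₁ hr
    set r₁ := homogeneousComponent 1 r with hr₁
    have hq2' : q₂ = z₂ * r₁ := by
      apply mul_left_cancel₀ hz₁0
      linear_combination hdet + z₂ * hq1'
    have hst := h (-r₁) ((homogeneousComponent_isHomogeneous 1 r).neg)
    rw [gred_iff μ₁ μ₂ hμsum hμ₂pos hμ₁] at hst
    exact hst.2 ⟨by linear_combination hq1', by linear_combination hq2'⟩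
  · rintro ⟨hLI, hdet⟩ z hz
    rw [gred_iff μ₁ μ₂ hμsum hμ₂pos hμ₁]
    refine ⟨hLI, ?_⟩
    rintro ⟨h1, h2⟩
    exact hdet (by linear_combination z₁ * h2 - z₂ * h1)
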